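/- Let f : ℝ_{>0}^n → ℝ, f(x) = ∑_{μ ∈ σ(f)} c_μ x^μ be a signomial whose support has a separating hyperplane H_{v,a}, and let R ⊆ σ(f) be a subset with σ_-(f) ⊆ R and H_{v,a} ∩ σ_+(f) ⊆ R. Then for every x ∈ ℝ_{>0}^n with f|_R(x) < 0, one has f|_R(t^v ∗ x) < 0 for all t ≥ 1, and there exists t_0 > 1 such that f(t^v ∗ x) < 0 for all t ≥ t_0, where t^v ∗ x denotes the point with coordinates (t^{v_1} x_1, …, t^{v_n} x_n). -/

import Mathlib

open Finset

/-- The signomial `x ↦ ∑_{μ ∈ S} c μ * x^μ` (with real exponents, via `Real.rpow`). -/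
noncomputable def sig {n : ℕ} (S : Finset (Fin n → ℝ)) (c : (Fin n → ℝ) → ℝ)
    (x : Fin n → ℝ) : ℝ :=
  ∑ μ ∈ S, c μ * ∏ i, x i ^ μ i

open Classical in
/-- The restriction `f|_F` of the signomial to a subset `F ⊆ ℝⁿ` of exponent vectors. -/
noncomputable def sigOn {n : ℕ} (S : Finset (Fin n → ℝ)) (c : (Fin n → ℝ) → ℝ)
    (F : Set (Fin n → ℝ)) (x : Fin n → ℝ) : ℝ :=
  ∑ μ ∈ S, if μ ∈ F then c μ * ∏ i, x i ^ μ i else 0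

/-- `f⁻¹(ℝ_{<0})`: the points of the positive orthant where the signomial is negative. -/
def negSet {n : ℕ} (S : Finset (Fin n → ℝ)) (c : (Fin n → ℝ) → ℝ) : Set (Fin n → ℝ) :=
  {x | (∀ i, 0 < x i) ∧ sig S c x < 0}

/-- `(f|_F)⁻¹(ℝ_{<0})`. -/
def negSetOn {n : ℕ} (S : Finset (Fin n → ℝ)) (c : (Fin n → ℝ) → ℝ)
    (F : Set (Fin n → ℝ)) : Set (Fin n → ℝ) :=
  {x | (∀ i, 0 < x i) ∧ sigOn S c F x < 0}

/-- `σ₊(f)`: the positive exponent vectors. -/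
def sigmaPos {n : ℕ} (S : Finset (Fin n → ℝ)) (c : (Fin n → ℝ) → ℝ) : Set (Fin n → ℝ) :=
  {μ | μ ∈ S ∧ 0 < c μ}

/-- `σ₋(f)`: the negative exponent vectors. -/
def sigmaNeg {n : ℕ} (S : Finset (Fin n → ℝ)) (c : (Fin n → ℝ) → ℝ) : Set (Fin n → ℝ) :=
  {μ | μ ∈ S ∧ c μ < 0}

/-- The hyperplane `H_{v,a}`. -/
def Hyp {n : ℕ} (v : Fin n → ℝ) (a : ℝ) : Set (Fin n → ℝ) :=
  {μ | ∑ i, v i * μ i = a}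

/-- The closed half-space `H⁺_{v,a}`. -/
def Hplus {n : ℕ} (v : Fin n → ℝ) (a : ℝ) : Set (Fin n → ℝ) :=
  {μ | a ≤ ∑ i, v i * μ i}

/-- The closed half-space `H⁻_{v,a}`. -/
def Hminus {n : ℕ} (v : Fin n → ℝ) (a : ℝ) : Set (Fin n → ℝ) :=
  {μ | ∑ i, v i * μ i ≤ a}

/-- The open half-space `H^{+,∘}_{v,a}`. -/
def HplusO {n : ℕ} (v : Fin n → ℝ) (a : ℝ) : Set (Fin n → ℝ) :=
  {μ | a < ∑ i, v i * μ i}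

/-- The open half-space `H^{-,∘}_{v,a}`. -/
def HminusO {n : ℕ} (v : Fin n → ℝ) (a : ℝ) : Set (Fin n → ℝ) :=
  {μ | ∑ i, v i * μ i < a}

/-- `U` is a connected component of `X` (a maximal nonempty preconnected subset of `X`). -/
def IsConnComp {n : ℕ} (X U : Set (Fin n → ℝ)) : Prop :=
  U.Nonempty ∧ U ⊆ X ∧ IsPreconnected U ∧
    ∀ W, U ⊆ W → W ⊆ X → IsPreconnected W → W = U

/-- The number (cardinality) of connected components of `X`. -/
noncomputable def compCard {n : ℕ} (X : Set (Fin n → ℝ)) : Cardinal :=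
  Cardinal.mk {U : Set (Fin n → ℝ) // IsConnComp X U}

/-- The face `N(f)_v` of the Newton polytope of a signomial with support `S`,
with outer normal vector `v`. -/
def faceOf {n : ℕ} (S : Finset (Fin n → ℝ)) (v : Fin n → ℝ) : Set (Fin n → ℝ) :=
  {ω ∈ convexHull ℝ (↑S : Set (Fin n → ℝ)) |
    ∀ μ ∈ convexHull ℝ (↑S : Set (Fin n → ℝ)), ∑ i, v i * μ i ≤ ∑ i, v i * ω i}


private lemma prod_rpow_key {n : ℕ} (v x μ : Fin n → ℝ) (hx : ∀ i, 0 < x i) {t : ℝ}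
    (ht : 0 < t) :
    ∏ i, (t ^ v i * x i) ^ μ i = t ^ (∑ i, v i * μ i) * ∏ i, x i ^ μ i := by
  rw [Real.rpow_sum_of_pos ht, ← Finset.prod_mul_distrib]
  refine Finset.prod_congr rfl fun i _ => ?_
  rw [Real.mul_rpow (Real.rpow_nonneg ht.le _) (hx i).le, ← Real.rpow_mul ht.le]

/-- The key path property behind Proposition 2.4: along the ray `t ↦ t^v ∗ x`, the
restriction stays negative for `t ≥ 1`, and `f` is eventually negative. -/
theorem stmt_5 (n : ℕ) (S : Finset (Fin n → ℝ)) (c : (Fin n → ℝ) → ℝ)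
    (hc : ∀ μ ∈ S, c μ ≠ 0)
    (v : Fin n → ℝ) (hv : v ≠ 0) (a : ℝ)
    (hsepneg : sigmaNeg S c ⊆ Hplus v a) (hseppos : sigmaPos S c ⊆ Hminus v a)
    (R : Finset (Fin n → ℝ)) (hRS : R ⊆ S)
    (hRneg : sigmaNeg S c ⊆ ↑R)
    (hRpos : Hyp v a ∩ sigmaPos S c ⊆ ↑R) :
    ∀ x : Fin n → ℝ, (∀ i, 0 < x i) → sig R c x < 0 →
      (∀ t : ℝ, 1 ≤ t → sig R c (fun i => t ^ v i * x i) < 0) ∧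
      (∃ t₀ : ℝ, 1 < t₀ ∧ ∀ t : ℝ, t₀ ≤ t → sig S c (fun i => t ^ v i * x i) < 0) := by
  intro x hx hfx
  set ε : ℝ := -sig R c x with hε
  have hεpos : 0 < ε := by simp only [hε]; linarith
  have key : ∀ t : ℝ, 0 < t → ∀ F : Finset (Fin n → ℝ),
      sig F c (fun i => t ^ v i * x i)
        = ∑ μ ∈ F, c μ * (∏ i, x i ^ μ i) * t ^ (∑ i, v i * μ i) := by
    intro t ht F
    unfold sig
    refine Finset.sum_congr rfl fun μ _ => ?_
    rw [prod_rpow_key v x μ hx ht]; ring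
  have part1 : ∀ t : ℝ, 1 ≤ t → sig R c (fun i => t ^ v i * x i) ≤ t ^ a * sig R c x := by
    intro t ht
    have ht0 : 0 < t := lt_of_lt_of_le one_pos ht
    rw [key t ht0 R]
    unfold sig
    rw [Finset.mul_sum]
    refine Finset.sum_le_sum fun μ hμ => ?_
    have hxμ : 0 < ∏ i, x i ^ μ i := Finset.prod_pos fun i _ => Real.rpow_pos_of_pos (hx i) _
    rcases lt_or_gt_of_ne (hc μ (hRS hμ)) with hneg | hpos
    · have hH : a ≤ ∑ i, v i * μ i := hsepneg ⟨hRS hμ, hneg⟩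
      have h2 : t ^ a ≤ t ^ (∑ i, v i * μ i) := Real.rpow_le_rpow_of_exponent_le ht hH
      have hcP : c μ * ∏ i, x i ^ μ i < 0 := mul_neg_of_neg_of_pos hneg hxμ
      nlinarith [mul_le_mul_of_nonpos_left h2 hcP.le]
    · have hH : ∑ i, v i * μ i ≤ a := hseppos ⟨hRS hμ, hpos⟩
      have h2 : t ^ (∑ i, v i * μ i) ≤ t ^ a := Real.rpow_le_rpow_of_exponent_le ht hH
      have hcP : 0 ≤ c μ * ∏ i, x i ^ μ i := le_of_lt (mul_pos hpos hxμ)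
      nlinarith [mul_le_mul_of_nonneg_left h2 hcP]
  refine ⟨fun t ht => ?_, ?_⟩
  · have ht0 : 0 < t := lt_of_lt_of_le one_pos ht
    have := part1 t ht
    have hta : 0 < t ^ a := Real.rpow_pos_of_pos ht0 a
    nlinarith
  · have hSR : ∀ μ ∈ S \ R, 0 < c μ ∧ ∑ i, v i * μ i < a := by
      intro μ hμ
      rw [Finset.mem_sdiff] at hμ
      have hpos : 0 < c μ := by
        rcases lt_or_gt_of_ne (hc μ hμ.1) with hneg | hpos
        · exact absurd (hRneg ⟨hμ.1, hneg⟩) hμ.2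
        · exact hpos
      refine ⟨hpos, ?_⟩
      rcases lt_or_eq_of_le (show ∑ i, v i * μ i ≤ a from hseppos ⟨hμ.1, hpos⟩) with h | h
      · exact h
      · exact absurd (hRpos ⟨h, hμ.1, hpos⟩) hμ.2
    set h : ℝ → ℝ := fun t => ∑ μ ∈ S \ R, c μ * (∏ i, x i ^ μ i) * t ^ (∑ i, v i * μ i - a)
      with hh
    have htend : Filter.Tendsto h Filter.atTop (nhds 0) := by
      have h0 : Filter.Tendsto (fun t : ℝ => ∑ μ ∈ S \ R,
          c μ * (∏ i, x i ^ μ i) * t ^ (∑ i, v i * μ i - a)) Filter.atTop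
          (nhds (∑ μ ∈ S \ R, (0 : ℝ))) := by
        refine tendsto_finset_sum _ fun μ hμ => ?_
        have hlt := (hSR μ hμ).2
        have h1 : Filter.Tendsto (fun t : ℝ => t ^ (∑ i, v i * μ i - a)) Filter.atTop
            (nhds 0) := by
          have := tendsto_rpow_neg_atTop (y := a - ∑ i, v i * μ i) (by linarith)
          simpa [neg_sub] using this
        simpa using h1.const_mul (c μ * ∏ i, x i ^ μ i)
      simpa [hh] using h0
    have hev : ∀ᶠ t in Filter.atTop, h t < ε := htend.eventually (eventually_lt_nhds hεpos)
    obtain ⟨t₁, ht₁⟩ := Filter.eventually_atTop.mp hev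
    refine ⟨max t₁ 2, lt_of_lt_of_le one_lt_two (le_max_right _ _), fun t ht => ?_⟩
    have ht2 : (2 : ℝ) ≤ t := le_trans (le_max_right _ _) ht
    have ht1le : (1 : ℝ) ≤ t := by linarith
    have ht0 : 0 < t := by linarith
    have hhlt : h t < ε := ht₁ t (le_trans (le_max_left _ _) ht)
    have hta : 0 < t ^ a := Real.rpow_pos_of_pos ht0 a
    have hsplit : sig S c (fun i => t ^ v i * x i)
        = sig R c (fun i => t ^ v i * x i)
          + ∑ μ ∈ S \ R, c μ * (∏ i, x i ^ μ i) * t ^ (∑ i, v i * μ i) := by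
      rw [key t ht0 S, key t ht0 R, ← Finset.sum_sdiff hRS]
      ring
    have hrest : ∑ μ ∈ S \ R, c μ * (∏ i, x i ^ μ i) * t ^ (∑ i, v i * μ i)
        = t ^ a * h t := by
      rw [hh, Finset.mul_sum]
      refine Finset.sum_congr rfl fun μ _ => ?_
      rw [show (∑ i, v i * μ i) = a + (∑ i, v i * μ i - a) by ring, Real.rpow_add ht0]
      ring
    have hR := part1 t ht1le
    rw [hsplit, hrest]
    have hne : t ^ a * sig R c x = -(t ^ a * ε) := by rw [hε]; ring
    have := mul_lt_mul_of_pos_left hhlt hta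
    linarith
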